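/- arXiv:0706.0401 — 4 statements merged into one kernel-verified Lean document; each statement's English description precedes it below -/
import Mathlib

section
/- Let a > 0, let u be a smooth complex-valued function defined on a neighbourhood of the circle r = a in {r > 0}, let λ ∈ ℂ with λ ≠ 0, and fix θ ∈ ℝ. Then the 2×2 matrices A(λ) and Ā(λ) (both evaluated at the point (a,θ), with the same spectral parameter λ) are equal if and only if u_r(a,θ) = −2/a. Consequently, under the boundary condition u_r|_{r=a} = −2/a, every solution Ȳ of Ȳ_θ = Ā(λ)|_{r=a} Ȳ also solves Y_θ = A(λ)|_{r=a} Y; this is case (i) of the lemma on integrable boundary conditions for the Liouville equation, with F = identity and h(λ) = λ. -/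
open Matrix

/-- The matrix `A(λ)` of the Lax pair of the polar Liouville equation, evaluated at the
boundary point `r = a`, expressed through the values `uv = u(a,θ)`, `ur = u_r(a,θ)`,
`ut = u_θ(a,θ)`. -/
noncomputable def AmatBd (a θ : ℝ) (uv ur ut lam : ℂ) : Matrix (Fin 2) (Fin 2) ℂ :=
  (Complex.I * a) •
  !![Complex.exp (uv + Complex.I * θ) / (2 * lam) - lam * Complex.exp (-(Complex.I * θ)),
     -Complex.exp (uv + Complex.I * θ) / (2 * lam) - ur / 4 - Complex.I * ut / (4 * a);
     Complex.exp (uv + Complex.I * θ) / (2 * lam) - ur / 4 - Complex.I * ut / (4 * a),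
     -Complex.exp (uv + Complex.I * θ) / (2 * lam) + lam * Complex.exp (-(Complex.I * θ))]

/-- The Kelvin-transformed matrix `Ā(λ̃)` of the Lax pair of the polar Liouville equation,
evaluated at the boundary point `r = a`. -/
noncomputable def AbarBd (a θ : ℝ) (uv ur ut lt : ℂ) : Matrix (Fin 2) (Fin 2) ℂ :=
  (Complex.I * a) •
  !![Complex.exp (uv + Complex.I * θ) / (2 * lt) - lt * Complex.exp (-(Complex.I * θ)),
     -Complex.exp (uv + Complex.I * θ) / (2 * lt) + ur / 4 + 1 / (a : ℂ)
       - Complex.I * ut / (4 * a);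
     Complex.exp (uv + Complex.I * θ) / (2 * lt) + ur / 4 + 1 / (a : ℂ)
       - Complex.I * ut / (4 * a),
     -Complex.exp (uv + Complex.I * θ) / (2 * lt) + lt * Complex.exp (-(Complex.I * θ))]

lemma Amat_eq_Abar_iff (a θ : ℝ) (ha : a ≠ 0) (uv ur ut lam : ℂ) :
    AmatBd a θ uv ur ut lam = AbarBd a θ uv ur ut lam ↔ ur = -2 / (a : ℂ) := by
  have haC : (a : ℂ) ≠ 0 := Complex.ofReal_ne_zero.mpr ha
  constructor
  · intro h
    have h01 := congr_fun (congr_fun h 0) 1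
    simp only [AmatBd, AbarBd, Matrix.smul_apply, Matrix.cons_val', Matrix.cons_val_one,
      Matrix.head_cons, Matrix.cons_val_zero, Matrix.empty_val', Matrix.cons_val_fin_one,
      Matrix.head_fin_const, smul_eq_mul] at h01
    have hIa : Complex.I * a ≠ 0 := mul_ne_zero Complex.I_ne_zero haC
    norm_num [Matrix.cons_val_one, Matrix.cons_val_zero, Matrix.head_cons] at h01
    have h2 := h01.resolve_right ha
    linear_combination (-2 : ℂ) * h2
  · intro h
    subst h
    unfold AmatBd AbarBd
    congr 1
    ext i j
    fin_cases i <;> fin_cases j <;> simp <;> field_simp <;> ring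

/-- Case (i) of the lemma on integrable boundary conditions for the Liouville equation
(`F` the identity, `h(λ) = λ`): at a fixed boundary point `(a,θ)`, `A(λ) = Ā(λ)` iff
`u_r(a,θ) = −2/a`; consequently, under the boundary condition `u_r|_{r=a} = −2/a`, every
solution `Ȳ` of `Ȳ_θ = Ā(λ)|_{r=a} Ȳ` also solves `Y_θ = A(λ)|_{r=a} Y`. -/
theorem liouville_boundary_case_i (a : ℝ) (ha : 0 < a) (u : ℝ × ℝ → ℂ) (V : Set (ℝ × ℝ))
    (hVopen : IsOpen V) (hVcirc : {p : ℝ × ℝ | p.1 = a} ⊆ V)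
    (hVpos : ∀ p ∈ V, 0 < p.1) (hu : ContDiffOn ℝ (⊤ : ℕ∞) u V)
    (lam : ℂ) (hlam : lam ≠ 0) (θ : ℝ)
    (ur ut : ℝ → ℂ) (hur : ∀ t : ℝ, ur t = fderiv ℝ u (a, t) (1, 0))
    (hut : ∀ t : ℝ, ut t = fderiv ℝ u (a, t) (0, 1)) :
    (AmatBd a θ (u (a, θ)) (ur θ) (ut θ) lam = AbarBd a θ (u (a, θ)) (ur θ) (ut θ) lam
      ↔ ur θ = -2 / (a : ℂ)) ∧
    ((∀ t : ℝ, ur t = -2 / (a : ℂ)) →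
      ∀ Y : ℝ → Fin 2 → ℂ,
        (∀ t : ℝ, HasDerivAt Y (AbarBd a t (u (a, t)) (ur t) (ut t) lam *ᵥ Y t) t) →
        ∀ t : ℝ, HasDerivAt Y (AmatBd a t (u (a, t)) (ur t) (ut t) lam *ᵥ Y t) t) := by
  have key : ∀ t : ℝ, (AmatBd a t (u (a, t)) (ur t) (ut t) lam
      = AbarBd a t (u (a, t)) (ur t) (ut t) lam ↔ ur t = -2 / (a : ℂ)) := fun t =>
    Amat_eq_Abar_iff a t (ne_of_gt ha) _ _ _ lam
  refine ⟨key θ, ?_⟩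
  intro h Y hY t
  have := hY t
  rwa [← (key t).2 (h t)] at this
end

section
/- Let a > 0, let u be a smooth complex-valued function defined on a neighbourhood of the circle r = a in {r > 0}, let λ ∈ ℂ with λ ≠ 0, fix θ ∈ ℝ, and let F be the constant 2×2 matrix [[0,−1],[−1,0]]. Then A(λ)|_{(a,θ)}·F = F·Ā(−λ)|_{(a,θ)} if and only if u_r(a,θ) = −2/a. Consequently, under the boundary condition u_r|_{r=a} = −2/a, for every solution Ȳ of Ȳ_θ = Ā(−λ)|_{r=a} Ȳ, the function Y = F·Ȳ solves Y_θ = A(λ)|_{r=a} Y; this is case (ii) of the lemma on integrable boundary conditions for the Liouville equation, with h(λ) = −λ. -/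
open Matrix

/-- If `ur = -2/a`, the conjugation identity `A(λ)·F = F·Ā(−λ)` holds. -/
lemma liouville_aux_key (a : ℝ) (ha : 0 < a) (θ : ℝ) (uv ut lam : ℂ) (hlam : lam ≠ 0)
    (ur : ℂ) (h : ur = -2 / (a : ℂ)) :
    AmatBd a θ uv ur ut lam * !![0, -1; -1, 0]
      = !![0, -1; -1, 0] * AbarBd a θ uv ur ut (-lam) := by
  have ha' : (a : ℂ) ≠ 0 := by exact_mod_cast ha.ne'
  have ha2 : a ≠ 0 := ha.ne'
  subst h
  ext i j
  fin_cases i <;> fin_cases j <;>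
    simp [AmatBd, AbarBd, Matrix.mul_apply, Fin.sum_univ_two]
  all_goals field_simp
  all_goals first | exact Or.inl trivial | exact Or.inl (by ring)

/-- Conversely, the conjugation identity forces `ur = -2/a`. -/
lemma liouville_aux_rev (a : ℝ) (ha : 0 < a) (θ : ℝ) (uv ut lam : ℂ)
    (ur : ℂ)
    (h : AmatBd a θ uv ur ut lam * !![0, -1; -1, 0]
      = !![0, -1; -1, 0] * AbarBd a θ uv ur ut (-lam)) :
    ur = -2 / (a : ℂ) := by
  have ha' : (a : ℂ) ≠ 0 := by exact_mod_cast ha.ne'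
  have hI : (Complex.I * (a:ℂ)) ≠ 0 := by simp [Complex.I_ne_zero, ha']
  have h00 := congrArg (fun M => M 0 0) h
  simp only [AmatBd, AbarBd, Matrix.mul_apply, Fin.sum_univ_two, Matrix.smul_apply,
    Matrix.cons_val', Matrix.cons_val_zero, Matrix.cons_val_one, Matrix.head_cons,
    Matrix.head_fin_const, Matrix.empty_val', Matrix.cons_val_fin_one, Matrix.of_apply,
    smul_eq_mul] at h00
  rw [show (2 : ℂ) * -lam = -(2 * lam) by ring, div_neg] at h00
  have h1 := mul_left_cancel₀ hI (show
      Complex.I * (a:ℂ) * (-Complex.exp (uv + Complex.I * θ) / (2 * lam) - ur / 4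
          - Complex.I * ut / (4 * (a:ℂ)))
        = Complex.I * (a:ℂ) * (-(Complex.exp (uv + Complex.I * θ) / (2 * lam)) + ur / 4
          + 1 / (a:ℂ) - Complex.I * ut / (4 * (a:ℂ))) by linear_combination -h00)
  linear_combination (-2 : ℂ) * h1

/-- Case (ii) of the lemma on integrable boundary conditions for the Liouville equation
(`F = [[0,−1],[−1,0]]`, `h(λ) = −λ`): at a fixed boundary point `(a,θ)`,
`A(λ)·F = F·Ā(−λ)` iff `u_r(a,θ) = −2/a`; consequently, under the boundary condition
`u_r|_{r=a} = −2/a`, for every solution `Ȳ` of `Ȳ_θ = Ā(−λ)|_{r=a} Ȳ` the function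
`Y = F·Ȳ` solves `Y_θ = A(λ)|_{r=a} Y`. -/
theorem liouville_boundary_case_ii (a : ℝ) (ha : 0 < a) (u : ℝ × ℝ → ℂ) (V : Set (ℝ × ℝ))
    (hVopen : IsOpen V) (hVcirc : {p : ℝ × ℝ | p.1 = a} ⊆ V)
    (hVpos : ∀ p ∈ V, 0 < p.1) (hu : ContDiffOn ℝ (⊤ : ℕ∞) u V)
    (lam : ℂ) (hlam : lam ≠ 0) (θ : ℝ)
    (ur ut : ℝ → ℂ) (hur : ∀ t : ℝ, ur t = fderiv ℝ u (a, t) (1, 0))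
    (hut : ∀ t : ℝ, ut t = fderiv ℝ u (a, t) (0, 1))
    (F : Matrix (Fin 2) (Fin 2) ℂ) (hF : F = !![0, -1; -1, 0]) :
    (AmatBd a θ (u (a, θ)) (ur θ) (ut θ) lam * F
        = F * AbarBd a θ (u (a, θ)) (ur θ) (ut θ) (-lam)
      ↔ ur θ = -2 / (a : ℂ)) ∧
    ((∀ t : ℝ, ur t = -2 / (a : ℂ)) →
      ∀ Ybar : ℝ → Fin 2 → ℂ,
        (∀ t : ℝ, HasDerivAt Ybar (AbarBd a t (u (a, t)) (ur t) (ut t) (-lam) *ᵥ Ybar t) t) →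
        ∀ t : ℝ, HasDerivAt (fun s => F *ᵥ Ybar s)
          (AmatBd a t (u (a, t)) (ur t) (ut t) lam *ᵥ (F *ᵥ Ybar t)) t) := by
  subst hF
  constructor
  · constructor
    · exact liouville_aux_rev a ha θ (u (a, θ)) (ut θ) lam (ur θ)
    · exact liouville_aux_key a ha θ (u (a, θ)) (ut θ) lam hlam (ur θ)
  · intro hbc Ybar hYbar t
    have key := liouville_aux_key a ha t (u (a, t)) (ut t) lam hlam (ur t) (hbc t)
    have hvec : AmatBd a t (u (a, t)) (ur t) (ut t) lam *ᵥ (!![0, -1; -1, 0] *ᵥ Ybar t)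
        = !![0, -1; -1, 0] *ᵥ (AbarBd a t (u (a, t)) (ur t) (ut t) (-lam) *ᵥ Ybar t) := by
      rw [Matrix.mulVec_mulVec, Matrix.mulVec_mulVec, key]
    rw [hvec]
    have h' := hasDerivAt_pi.mp (hYbar t)
    rw [hasDerivAt_pi]
    intro i
    have hd := ((h' 0).const_mul (!![(0:ℂ), -1; -1, 0] i 0)).add
      ((h' 1).const_mul (!![(0:ℂ), -1; -1, 0] i 1))
    convert hd using 1
    · funext s
      simp [Matrix.mulVec, dotProduct, Fin.sum_univ_two]
    · simp [Matrix.mulVec, dotProduct, Fin.sum_univ_two]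
end

section
/- (Lemma on even soliton solutions.) Let N = 2k with k ≥ 1, let z₁,…,z_N ∈ (−1,1) be nonzero reals with z_{N+1−i} = −z_i for all i, and let m₁,…,m_N : ℝ → ℝ be positive functions satisfying m_{N+1−i}(t) = m_i(−t) for all i and t. For n ∈ ℤ and t ∈ ℝ define the N×N matrix M(n,t) with entries M_{ij}(n,t) = δ_{ij} + √(m_i(t)·m_j(t))·(z_i·z_j)^{n+1}/(1 − z_i·z_j). Then det M(n,t) = det M(n,−t) for all n ∈ ℤ and t ∈ ℝ. Consequently, for any constant c, the function v(n,t) = c + ln( det M(n,t) / det M(n−1,t) ) satisfies v(n,t) = v(n,−t) for all n and t (wherever the determinants are nonzero), i.e. the N-soliton solution built from such symmetric data is an even function of t. -/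
/-- Lemma on even soliton solutions: if `N = 2k`, the data `z_i ∈ (−1,1) \ {0}` satisfy
`z_{N+1−i} = −z_i` and the positive coefficients satisfy `m_{N+1−i}(t) = m_i(−t)`, then
the determinant of the soliton matrix
`M_{ij}(n,t) = δ_{ij} + √(m_i(t) m_j(t)) (z_i z_j)^{n+1}/(1 − z_i z_j)` is even in `t`;
consequently the N-soliton solution `v(n,t) = c + ln(det M(n,t)/det M(n−1,t))` is an
even function of `t` (wherever the determinants are nonzero). -/
theorem even_soliton_determinant (N k : ℕ) (hk : 1 ≤ k) (hN : N = 2 * k)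
    (z : Fin N → ℝ) (hz : ∀ i, z i ∈ Set.Ioo (-1 : ℝ) 1) (hz0 : ∀ i, z i ≠ 0)
    (hzsym : ∀ i, z i.rev = -z i)
    (m : Fin N → ℝ → ℝ) (hmpos : ∀ i t, 0 < m i t)
    (hmsym : ∀ i t, m i.rev t = m i (-t))
    (M : ℤ → ℝ → Matrix (Fin N) (Fin N) ℝ)
    (hM : ∀ (n : ℤ) (t : ℝ) (i j : Fin N),
      M n t i j = (if i = j then (1 : ℝ) else 0)
        + Real.sqrt (m i t * m j t) * (z i * z j) ^ (n + 1) / (1 - z i * z j)) :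
    (∀ (n : ℤ) (t : ℝ), (M n t).det = (M n (-t)).det) ∧
    (∀ (c : ℝ) (n : ℤ) (t : ℝ), (M n t).det ≠ 0 → (M (n - 1) t).det ≠ 0 →
      c + Real.log ((M n t).det / (M (n - 1) t).det)
        = c + Real.log ((M n (-t)).det / (M (n - 1) (-t)).det)) := by
  have key : ∀ (n : ℤ) (t : ℝ), (M n t).det = (M n (-t)).det := by
    intro n t
    have h : M n t = (M n (-t)).submatrix Fin.rev Fin.rev := by
      ext i j
      rw [Matrix.submatrix_apply, hM, hM]
      have hmi : m i.rev (-t) = m i t := by rw [hmsym, neg_neg]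
      have hmj : m j.rev (-t) = m j t := by rw [hmsym, neg_neg]
      rw [hmi, hmj, hzsym, hzsym]
      simp only [Fin.rev_inj, neg_mul_neg]
    rw [h]
    exact Matrix.det_submatrix_equiv_self Fin.revPerm _
  exact ⟨key, fun c n t _ _ => by rw [key n t, key (n-1) t]⟩
end

section
/- (Reduction of the radial Neumann problem to the one-dimensional Toda lattice.) Let a > 0 and let v : ℤ → ℝ → ℝ be twice differentiable in t and satisfy the one-dimensional Toda lattice equation v″(n,t) = ω̄(n−1,t) − ω̄(n,t) for all n ∈ ℤ and t ∈ ℝ, where ω̄(n,t) = exp(v(n,t) − v(n+1,t)), together with v′(n,0) = 0 for all n ∈ ℤ. Define u(n,r) = v(n, ln(r/a)) + 2n·ln(r) for r > 0. Then u satisfies u_rr(n,r) + (1/r)u_r(n,r) = ω(n−1,r) − ω(n,r) for all n ∈ ℤ and r > 0, where ω(n,r) = exp(u(n,r) − u(n+1,r)), and u satisfies the Neumann boundary condition u_r(n,a) = 2n/a for all n ∈ ℤ. -/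
/-- Reduction of the radial Neumann problem to the one-dimensional Toda lattice: if
`v(n,t)` solves the one-dimensional Toda lattice `v″(n) = ω̄(n−1) − ω̄(n)` with
`v′(n,0) = 0`, then `u(n,r) = v(n, ln(r/a)) + 2n ln r` solves the rotationally symmetric
polar Toda lattice `u_rr(n) + (1/r) u_r(n) = ω(n−1) − ω(n)` for `r > 0` with the Neumann
boundary condition `u_r(n,a) = 2n/a`. -/
theorem radial_neumann_reduction (a : ℝ) (ha : 0 < a) (v : ℤ → ℝ → ℝ)
    (hv1 : ∀ n : ℤ, Differentiable ℝ (v n))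
    (hv2 : ∀ n : ℤ, Differentiable ℝ (deriv (v n)))
    (hToda : ∀ (n : ℤ) (t : ℝ),
      deriv (deriv (v n)) t
        = Real.exp (v (n - 1) t - v n t) - Real.exp (v n t - v (n + 1) t))
    (hbc : ∀ n : ℤ, deriv (v n) 0 = 0)
    (u : ℤ → ℝ → ℝ)
    (hu : ∀ (n : ℤ) (r : ℝ), u n r = v n (Real.log (r / a)) + 2 * n * Real.log r) :
    (∀ (n : ℤ) (r : ℝ), 0 < r →
      deriv (deriv (u n)) r + (1 / r) * deriv (u n) r
        = Real.exp (u (n - 1) r - u n r) - Real.exp (u n r - u (n + 1) r)) ∧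
    (∀ n : ℤ, deriv (u n) a = 2 * n / a) := by
  have haz : a ≠ 0 := ha.ne'
  set L : ℝ → ℝ := fun r => Real.log (r / a) with hLdef
  -- derivative of L at positive points
  have hLd : ∀ r : ℝ, 0 < r → HasDerivAt L r⁻¹ r := by
    intro r hr
    have h1 : HasDerivAt (fun x : ℝ => x / a) (1 / a) r := by
      simpa using (hasDerivAt_id r).div_const a
    have h2 := (Real.hasDerivAt_log (div_ne_zero hr.ne' haz)).comp r h1
    refine h2.congr_deriv ?_
    field_simp
  have huf : ∀ n : ℤ, u n = fun r => v n (L r) + 2 * (n : ℝ) * Real.log r := by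
    intro n; funext r; exact hu n r
  -- first derivative of u
  have hud : ∀ (n : ℤ) (r : ℝ), 0 < r →
      HasDerivAt (u n) (deriv (v n) (L r) * r⁻¹ + 2 * (n : ℝ) * r⁻¹) r := by
    intro n r hr
    rw [huf n]
    have h1 : HasDerivAt (fun r => v n (L r)) (deriv (v n) (L r) * r⁻¹) r :=
      ((hv1 n (L r)).hasDerivAt).comp r (hLd r hr)
    have h2 : HasDerivAt (fun r : ℝ => 2 * (n : ℝ) * Real.log r) (2 * (n : ℝ) * r⁻¹) r := by
      simpa [mul_comm] using (Real.hasDerivAt_log hr.ne').const_mul (2 * (n : ℝ))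
    exact h1.add h2
  have hud' : ∀ (n : ℤ) (r : ℝ), 0 < r →
      deriv (u n) r = deriv (v n) (L r) * r⁻¹ + 2 * (n : ℝ) * r⁻¹ :=
    fun n r hr => (hud n r hr).deriv
  constructor
  · intro n r hr
    -- second derivative of u
    have heq : deriv (u n) =ᶠ[nhds r]
        (fun r => deriv (v n) (L r) * r⁻¹ + 2 * (n : ℝ) * r⁻¹) := by
      filter_upwards [Ioi_mem_nhds hr] with x hx
      exact hud' n x hx
    have h1 : HasDerivAt (fun r => deriv (v n) (L r))
        (deriv (deriv (v n)) (L r) * r⁻¹) r :=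
      ((hv2 n (L r)).hasDerivAt).comp r (hLd r hr)
    have h2 : HasDerivAt (fun r : ℝ => r⁻¹) (-(r ^ 2)⁻¹) r := hasDerivAt_inv hr.ne'
    have h3 : HasDerivAt (fun r => deriv (v n) (L r) * r⁻¹ + 2 * (n : ℝ) * r⁻¹)
        ((deriv (deriv (v n)) (L r) * r⁻¹) * r⁻¹ + deriv (v n) (L r) * (-(r ^ 2)⁻¹)
          + 2 * (n : ℝ) * (-(r ^ 2)⁻¹)) r :=
      (h1.mul h2).add (h2.const_mul (2 * (n : ℝ)))
    have hdd : deriv (deriv (u n)) r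
        = (deriv (deriv (v n)) (L r) * r⁻¹) * r⁻¹ + deriv (v n) (L r) * (-(r ^ 2)⁻¹)
          + 2 * (n : ℝ) * (-(r ^ 2)⁻¹) :=
      (h3.congr_of_eventuallyEq heq).deriv
    have hexp2 : Real.exp (2 * Real.log r) = r ^ 2 := by
      rw [two_mul, Real.exp_add, Real.exp_log hr]; ring
    have key : deriv (deriv (u n)) r + (1 / r) * deriv (u n) r
        = deriv (deriv (v n)) (L r) / r ^ 2 := by
      rw [hdd, hud' n r hr]
      field_simp
      ring
    rw [key, hToda n (L r), hu (n - 1) r, hu n r, hu (n + 1) r]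
    have e1 : ((n : ℝ) - 1) = ((n - 1 : ℤ) : ℝ) := by push_cast; ring
    have e2 : ((n : ℝ) + 1) = ((n + 1 : ℤ) : ℝ) := by push_cast; ring
    have hA : v (n - 1) (L r) + 2 * ((n - 1 : ℤ) : ℝ) * Real.log r
        - (v n (L r) + 2 * (n : ℝ) * Real.log r)
        = v (n - 1) (L r) - v n (L r) - 2 * Real.log r := by push_cast; ring
    have hB : v n (L r) + 2 * (n : ℝ) * Real.log r
        - (v (n + 1) (L r) + 2 * ((n + 1 : ℤ) : ℝ) * Real.log r)
        = v n (L r) - v (n + 1) (L r) - 2 * Real.log r := by push_cast; ring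
    have hC : ∀ x : ℝ, Real.exp (x - 2 * Real.log r) = Real.exp x / r ^ 2 := by
      intro x; rw [Real.exp_sub, hexp2]
    rw [hA, hB, hC, hC]
    ring
  · intro n
    have hLa : L a = 0 := by simp [hLdef, div_self haz]
    rw [hud' n a ha, hLa, hbc n]
    field_simp
    ring
end
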